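/- For every n, d ≥ 1 and every finite nonempty multiset D ⊆ ℝ^d with L_D^⋆ > 0, there exist n points z₁,…,z_n ∈ D such that L_D((z₁+⋯+z_n)/n) ≤ ((n+1)/n) · L_D^⋆. -/

import Mathlib

open Multiset

variable {E : Type*} [NormedAddCommGroup E] [InnerProductSpace ℝ E]

lemma exists_le_avg {α : Type*} (D : Multiset α) (hD : D ≠ 0) (f : α → ℝ) :
    ∃ z ∈ D, f z ≤ (D.map f).sum / D.card := by
  by_contra h
  push_neg at h
  have hcard : 0 < (D.card : ℝ) := by
    exact_mod_cast Multiset.card_pos.2 hD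
  have hlt : (D.map (fun _ => (D.map f).sum / D.card)).sum < (D.map f).sum :=
    Multiset.sum_lt_sum_of_nonempty hD h
  rw [Multiset.map_const', Multiset.sum_replicate, nsmul_eq_mul] at hlt
  rw [mul_div_cancel₀ _ hcard.ne'] at hlt
  exact lt_irrefl _ hlt

lemma inner_sum_center (D : Multiset E) (μ : E) (hsum : D.sum = (D.card : ℝ) • μ)
    (v : E) : (D.map (fun z => (inner ℝ v (z - μ) : ℝ))).sum = 0 := by
  have h1 : (D.map (fun z => (inner ℝ v (z - μ) : ℝ))).sum
      = (inner ℝ v ((D.map (fun z => z - μ)).sum) : ℝ) := by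
    have := map_multiset_sum (innerSL ℝ v) (D.map (fun z => z - μ))
    rw [Multiset.map_map] at this
    exact this.symm
  rw [h1, Multiset.sum_map_sub]
  simp only [Multiset.map_id']
  rw [Multiset.map_const', Multiset.sum_replicate, ← Nat.cast_smul_eq_nsmul ℝ, ← hsum]
  simp

lemma sum_sq_expand (D : Multiset E) (μ : E) (hsum : D.sum = (D.card : ℝ) • μ)
    (a : E) (t : ℝ) :
    (D.map (fun z => ‖a + t • (z - μ)‖^2)).sum
      = D.card * ‖a‖^2 + t^2 * (D.map (fun z => ‖μ - z‖^2)).sum := by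
  have hterm : ∀ z : E, ‖a + t • (z - μ)‖^2
      = (‖a‖^2 + t^2 * ‖μ - z‖^2) + (2 * t) * (inner ℝ a (z - μ) : ℝ) := by
    intro z
    rw [norm_add_sq_real, norm_smul, real_inner_smul_right, norm_sub_rev μ z]
    simp [mul_pow]
    ring
  simp only [hterm]
  rw [Multiset.sum_map_add, Multiset.sum_map_add]
  have h0 : (D.map (fun z => (2 * t) * (inner ℝ a (z - μ) : ℝ))).sum = 0 := by
    rw [Multiset.sum_map_mul_left, inner_sum_center D μ hsum a, mul_zero]
  rw [h0, add_zero, Multiset.sum_map_mul_left]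
  rw [Multiset.map_const', Multiset.sum_replicate, nsmul_eq_mul]

lemma step_lemma (D : Multiset E) (hD : D ≠ 0) (μ : E)
    (hsum : D.sum = (D.card : ℝ) • μ) (a : E) (t : ℝ) :
    ∃ w ∈ D, ‖a + t • (w - μ)‖^2
      ≤ ‖a‖^2 + t^2 * ((D.map (fun z => ‖μ - z‖^2)).sum / D.card) := by
  obtain ⟨w, hw, hle⟩ := exists_le_avg D hD (fun z => ‖a + t • (z - μ)‖^2)
  refine ⟨w, hw, hle.trans_eq ?_⟩
  rw [sum_sq_expand D μ hsum a t]
  have hcard : (D.card : ℝ) ≠ 0 := by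
    exact_mod_cast (Multiset.card_pos.2 hD).ne'
  field_simp

lemma key_induction (D : Multiset E) (hD : D ≠ 0) (μ : E)
    (hsum : D.sum = (D.card : ℝ) • μ) :
    ∀ k : ℕ, 1 ≤ k → ∃ z : Fin k → E, (∀ i, z i ∈ D) ∧
      ‖(k : ℝ)⁻¹ • ∑ i, z i - μ‖^2
        ≤ ((D.map (fun z => ‖μ - z‖^2)).sum / D.card) / k := by
  set Ls : ℝ := (D.map (fun z => ‖μ - z‖^2)).sum / D.card with hLs
  intro k hk
  induction k with
  | zero => omega
  | succ k ih =>
    rcases Nat.eq_or_lt_of_le hk with h1 | h1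
    · -- k + 1 = 1, i.e. k = 0
      obtain ⟨w, hw, hle⟩ := step_lemma D hD μ hsum 0 1
      refine ⟨fun _ => w, fun _ => hw, ?_⟩
      have hk0 : k = 0 := by omega
      subst hk0
      simpa using hle
    · have hk1 : 1 ≤ k := by omega
      obtain ⟨z, hz, hbound⟩ := ih hk1
      have hkR : (k : ℝ) ≠ 0 := by positivity
      have hk1R : ((k : ℝ) + 1) ≠ 0 := by positivity
      set h : E := (k : ℝ)⁻¹ • ∑ i, z i with hh
      obtain ⟨w, hw, hle⟩ := step_lemma D hD μ hsum
        (((k : ℝ)/((k : ℝ)+1)) • (h - μ)) (((k : ℝ)+1)⁻¹)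
      refine ⟨Fin.snoc z w, ?_, ?_⟩
      · intro i
        induction i using Fin.lastCases with
        | last => simpa using hw
        | cast i => simpa using hz i
      · have hsum' : ∑ i, (Fin.snoc z w : Fin (k+1) → E) i = ∑ i, z i + w := by
          rw [Fin.sum_univ_castSucc]
          simp
        have hrw : ((k+1 : ℕ) : ℝ)⁻¹ • ∑ i, (Fin.snoc z w : Fin (k+1) → E) i - μ
            = ((k : ℝ)/((k : ℝ)+1)) • (h - μ) + ((k : ℝ)+1)⁻¹ • (w - μ) := by
          rw [hsum']
          have hzsum : ∑ i, z i = (k : ℝ) • h := by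
            rw [hh, smul_smul, mul_inv_cancel₀ hkR, one_smul]
          rw [hzsum]
          push_cast
          match_scalars <;> (field_simp; try ring)
        rw [hrw]
        refine hle.trans ?_
        have hnorma : ‖((k : ℝ)/((k : ℝ)+1)) • (h - μ)‖^2
            = ((k : ℝ)/((k : ℝ)+1))^2 * ‖h - μ‖^2 := by
          rw [norm_smul, mul_pow]
          congr 1
          rw [Real.norm_eq_abs, abs_of_nonneg (by positivity)]
        rw [hnorma]
        have hmono : ((k : ℝ)/((k : ℝ)+1))^2 * ‖h - μ‖^2
            ≤ ((k : ℝ)/((k : ℝ)+1))^2 * (Ls / k) := by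
          apply mul_le_mul_of_nonneg_left _ (by positivity)
          exact hbound
        have heq : ((k : ℝ)/((k : ℝ)+1))^2 * (Ls / k) + (((k : ℝ)+1)⁻¹)^2 * Ls
            = Ls / ((k:ℕ)+1 : ℝ) := by
          field_simp
        push_cast
        push_cast at heq
        linarith [hmono, heq]

theorem mean_estimation_upper_bound_highdim
    (n d : ℕ) (hn : 1 ≤ n) (hd : 1 ≤ d)
    (D : Multiset (EuclideanSpace ℝ (Fin d))) (hD : D ≠ 0)
    (L : EuclideanSpace ℝ (Fin d) → ℝ)
    (hL : ∀ h, L h = (D.map (fun z => ‖h - z‖^2)).sum / D.card)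
    (μ : EuclideanSpace ℝ (Fin d)) (hμ : μ = (D.card : ℝ)⁻¹ • D.sum)
    (hmin : ∀ h, L μ ≤ L h)
    (hpos : 0 < L μ) :
    ∃ z : Fin n → EuclideanSpace ℝ (Fin d), (∀ i, z i ∈ D) ∧
      L ((n : ℝ)⁻¹ • ∑ i, z i) ≤ (((n : ℝ) + 1) / n) * L μ := by
  have hcard : (D.card : ℝ) ≠ 0 := by
    exact_mod_cast (Multiset.card_pos.2 hD).ne'
  have hsum : D.sum = (D.card : ℝ) • μ := by
    rw [hμ, smul_smul, mul_inv_cancel₀ hcard, one_smul]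
  set Ls : ℝ := (D.map (fun z => ‖μ - z‖^2)).sum / D.card with hLs
  have hLμ : L μ = Ls := by rw [hL]
  have hdecomp : ∀ g, L g = Ls + ‖g - μ‖^2 := by
    intro g
    have hfun : (fun z : EuclideanSpace ℝ (Fin d) => ‖g - z‖^2)
        = fun z => ‖(g - μ) + (-1 : ℝ) • (z - μ)‖^2 := by
      funext z
      congr 1
      congr 1
      module
    rw [hL, hfun, sum_sq_expand D μ hsum (g - μ) (-1)]
    rw [hLs]
    field_simp
    ring
  obtain ⟨z, hz, hbound⟩ := key_induction D hD μ hsum n hn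
  refine ⟨z, hz, ?_⟩
  rw [hdecomp, hLμ]
  have hnR : (n : ℝ) ≠ 0 := by positivity
  have : ((n : ℝ) + 1) / n * Ls = Ls + Ls / n := by field_simp
  rw [this]
  linarith [hbound]
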